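/- Let X ⊆ ℝ² be a finite set in general position and let cl be the induced convex geometry S ↦ convexHull ℝ S ∩ X. Then every circuit of (X, cl) has exactly 4 elements, and the map C ↦ (C \ {x(C)}, x(C)), where x(C) is the root of C, is a bijection from the set of circuits of (X, cl) onto the set of rooted triangles of X. -/

import Mathlib

open Set

/-- Orientation sign of a triple of points in the plane: the sign of the determinant of
the matrix with columns `y - x` and `z - x`. -/
noncomputable def osign (x y z : Fin 2 → ℝ) : ℝ :=
  Real.sign ((y 0 - x 0) * (z 1 - x 1) - (y 1 - x 1) * (z 0 - x 0))

/-- A planar point set is in general position if no three distinct points are collinear. -/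
def GenPos (X : Set (Fin 2 → ℝ)) : Prop :=
  ∀ x ∈ X, ∀ y ∈ X, ∀ z ∈ X, x ≠ y → y ≠ z → x ≠ z →
    ¬ Collinear ℝ ({x, y, z} : Set (Fin 2 → ℝ))

/-- A convex geometry on a finite set `J`: a closure operator satisfying the
anti-exchange axiom. -/
structure ConvexGeometry (J : Type) [Fintype J] where
  cl : Set J → Set J
  extensive : ∀ A : Set J, A ⊆ cl A
  mono : ∀ A B : Set J, A ⊆ B → cl A ⊆ cl B
  idem : ∀ A : Set J, cl (cl A) = cl A
  antiExchange : ∀ A : Set J, cl A = A → ∀ x y : J, x ≠ y → x ∉ A → y ∉ A →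
    x ∈ cl (A ∪ {y}) → y ∉ cl (A ∪ {x})

variable {J : Type} [Fintype J]

/-- A set is dependent if some element lies in the closure of the rest. -/
def ConvexGeometry.Dependent (G : ConvexGeometry J) (D : Set J) : Prop :=
  ∃ x ∈ D, x ∈ G.cl (D \ {x})

/-- A circuit is an inclusion-minimal dependent set. -/
def ConvexGeometry.IsCircuit (G : ConvexGeometry J) (C : Set J) : Prop :=
  G.Dependent C ∧ ∀ D ⊆ C, G.Dependent D → D = C

/-- A convex 4-geometry: all circuits have exactly 4 elements. -/
def ConvexGeometry.Is4Geometry (G : ConvexGeometry J) : Prop :=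
  ∀ C : Set J, G.IsCircuit C → C.ncard = 4

/-- `(T, a)` is a rooted triangle of `G` if `T ∪ {a}` is a circuit with root `a`. -/
def ConvexGeometry.RT (G : ConvexGeometry J) (T : Set J) (a : J) : Prop :=
  a ∉ T ∧ G.IsCircuit (insert a T) ∧ a ∈ G.cl T

/-- A realization of a convex geometry in the plane. -/
def IsRealization (G : ConvexGeometry J) (f : J → (Fin 2 → ℝ)) : Prop :=
  Function.Injective f ∧ GenPos (Set.range f) ∧
    ∀ Y : Set J, f '' (G.cl Y) = convexHull ℝ (f '' Y) ∩ Set.range f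

/-- `G.rest n` is the set `Jₙ` remaining after removing the first `n` layers. -/
def ConvexGeometry.rest (G : ConvexGeometry J) : ℕ → Set J
  | 0 => Set.univ
  | n + 1 => {x ∈ G.rest n | x ∈ G.cl (G.rest n \ {x})}

/-- The `n`-th layer: the extreme points of the restricted geometry on `G.rest n`. -/
def ConvexGeometry.layer (G : ConvexGeometry J) (n : ℕ) : Set J :=
  {x ∈ G.rest n | x ∉ G.cl (G.rest n \ {x})}

/-- A dependent subset of the convex geometry induced on `X` by convex hulls. -/
def DepOn (X D : Set (Fin 2 → ℝ)) : Prop :=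
  ∃ x ∈ D, x ∈ convexHull ℝ (D \ {x}) ∩ X

/-- A circuit of the convex geometry induced on `X`: an inclusion-minimal dependent subset. -/
def CircuitOn (X C : Set (Fin 2 → ℝ)) : Prop :=
  C ⊆ X ∧ DepOn X C ∧ ∀ D ⊆ C, DepOn X D → D = C

/-- A rooted triangle of `X`: a pair `(T, x)` with `T ⊆ X`, `|T| = 3`, `x ∈ X \ T`,
and `x ∈ convexHull ℝ T`. -/
def RootedTriOn (X : Set (Fin 2 → ℝ)) (p : Set (Fin 2 → ℝ) × (Fin 2 → ℝ)) : Prop :=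
  p.1 ⊆ X ∧ p.1.ncard = 3 ∧ p.2 ∈ X ∧ p.2 ∉ p.1 ∧ p.2 ∈ convexHull ℝ p.1

lemma exists_tri {X D : Set (Fin 2 → ℝ)} (hgp : GenPos X) (hDX : D ⊆ X) {x : Fin 2 → ℝ}
    (hxX : x ∈ X) (hxD : x ∉ D) (hx : x ∈ convexHull ℝ D) :
    ∃ T ⊆ D, T.ncard = 3 ∧ x ∈ convexHull ℝ T := by
  rw [convexHull_eq_union] at hx
  simp only [Set.mem_iUnion] at hx
  obtain ⟨t, hts, hai, hxt⟩ := hx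
  have hcard : t.card ≤ 3 := by
    have h1 := hai.card_le_finrank_succ
    have h2 : Module.finrank ℝ (vectorSpan ℝ (Set.range ((↑) : t → (Fin 2 → ℝ)))) ≤ 2 := by
      have := Submodule.finrank_le (vectorSpan ℝ (Set.range ((↑) : t → (Fin 2 → ℝ))))
      simpa [Module.finrank_fin_fun] using this
    simp only [Fintype.card_coe] at h1
    omega
  have h3 : t.card = 3 := by
    rcases Nat.lt_or_ge t.card 3 with hlt | hge
    · exfalso
      interval_cases h : t.card
      · rw [Finset.card_eq_zero.mp h] at hxt
        simp at hxt
      · obtain ⟨a, rfl⟩ := Finset.card_eq_one.mp h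
        simp only [Finset.coe_singleton, convexHull_singleton, mem_singleton_iff] at hxt
        exact hxD (hts (by simp [hxt]))
      · obtain ⟨a, b, hab, rfl⟩ := Finset.card_eq_two.mp h
        rw [Finset.coe_insert, Finset.coe_singleton] at hxt hts
        have hcol := collinear_insert_of_mem_affineSpan_pair (convexHull_subset_affineSpan _ hxt)
        have haD : a ∈ D := hts (by simp)
        have hbD : b ∈ D := hts (by simp)
        exact hgp x hxX a (hDX haD) b (hDX hbD) (fun h => hxD (h ▸ haD)) hab
          (fun h => hxD (h ▸ hbD)) hcol
    · omega
  exact ⟨↑t, hts, by rw [Set.ncard_coe_finset, h3], hxt⟩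
lemma mem_hull_of_mutual {x y : Fin 2 → ℝ} {S : Set (Fin 2 → ℝ)} (hxy : x ≠ y)
    (hx : x ∈ convexHull ℝ (insert y S)) (hy : y ∈ convexHull ℝ (insert x S)) :
    x ∈ convexHull ℝ S := by
  rcases S.eq_empty_or_nonempty with rfl | hS
  · rw [show insert y (∅ : Set (Fin 2 → ℝ)) = {y} by ext z; simp, convexHull_singleton] at hx
    exact absurd hx hxy
  rw [convexHull_insert hS] at hx hy
  simp only [mem_convexJoin, mem_singleton_iff, exists_eq_left] at hx hy
  obtain ⟨z, hzS, ax, bx, hax, hbx, habx, hex⟩ := hx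
  obtain ⟨w, hwS, ay, by', hay, hby, haby, hey⟩ := hy
  have hbx0 : bx ≠ 0 := by
    rintro rfl
    apply hxy
    have h1 : ax = 1 := by linarith
    rw [h1] at hex
    simpa using hex.symm
  have hby0 : by' ≠ 0 := by
    rintro rfl
    apply hxy
    have h1 : ay = 1 := by linarith
    rw [h1] at hey
    simpa using hey
  have hbxp : 0 < bx := hbx.lt_of_ne (Ne.symm hbx0)
  have hbyp : 0 < by' := hby.lt_of_ne (Ne.symm hby0)
  have hc : 0 < 1 - ax * ay := by nlinarith [mul_nonneg hax hay]
  have key : (ax * by') • w + bx • z = (1 - ax * ay) • x := by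
    linear_combination (norm := module) hex + ax • hey
  have hfin : ((1 - ax*ay)⁻¹ * (ax * by')) • w + ((1 - ax*ay)⁻¹ * bx) • z = x := by
    rw [mul_smul (1 - ax*ay)⁻¹ (ax * by'), mul_smul (1 - ax*ay)⁻¹ bx, ← smul_add, key,
      smul_smul, inv_mul_cancel₀ hc.ne', one_smul]
  have hmem := (convex_convexHull ℝ S) hwS hzS
    (mul_nonneg (inv_nonneg.mpr hc.le) (mul_nonneg hax hby))
    (mul_nonneg (inv_nonneg.mpr hc.le) hbx)
    (by field_simp; linear_combination ax * haby + habx)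
  rwa [hfin] at hmem

lemma root_eq {X C : Set (Fin 2 → ℝ)} (hgp : GenPos X) (hCX : C ⊆ X) (hC : C.Finite)
    (hC4 : C.ncard ≤ 4) {x y : Fin 2 → ℝ} (hx : x ∈ C) (hy : y ∈ C)
    (hxh : x ∈ convexHull ℝ (C \ {x})) (hyh : y ∈ convexHull ℝ (C \ {y})) : x = y := by
  by_contra hne
  have h1 : C \ {x} = insert y (C \ {x, y}) := by
    ext z
    simp only [mem_diff, mem_insert_iff, mem_singleton_iff]
    constructor
    · rintro ⟨hz, hzx⟩
      by_cases hzy : z = y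
      · exact Or.inl hzy
      · exact Or.inr ⟨hz, by tauto⟩
    · rintro (rfl | ⟨hz, h⟩)
      · exact ⟨hy, Ne.symm hne⟩
      · exact ⟨hz, by tauto⟩
  have h2 : C \ {y} = insert x (C \ {x, y}) := by
    ext z
    simp only [mem_diff, mem_insert_iff, mem_singleton_iff]
    constructor
    · rintro ⟨hz, hzy⟩
      by_cases hzx : z = x
      · exact Or.inl hzx
      · exact Or.inr ⟨hz, by tauto⟩
    · rintro (rfl | ⟨hz, h⟩)
      · exact ⟨hx, hne⟩
      · exact ⟨hz, by tauto⟩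
  rw [h1] at hxh
  rw [h2] at hyh
  have hxS := mem_hull_of_mutual hne hxh hyh
  have hSX : C \ {x, y} ⊆ X := fun z hz => hCX hz.1
  have hxnS : x ∉ C \ {x, y} := fun h => h.2 (Or.inl rfl)
  obtain ⟨T, hTS, hT3, -⟩ := exists_tri hgp hSX (hCX hx) hxnS hxS
  have hle : T.ncard ≤ (C \ {x, y}).ncard := Set.ncard_le_ncard hTS hC.diff
  have hsub : ({x, y} : Set (Fin 2 → ℝ)) ⊆ C := by
    rintro z hz
    simp only [mem_insert_iff, mem_singleton_iff] at hz
    rcases hz with rfl | rfl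
    exacts [hx, hy]
  have hS2 : (C \ {x, y}).ncard ≤ 2 := by
    rw [Set.ncard_diff hsub (Set.toFinite _), Set.ncard_pair hne]
    omega
  omega

lemma tri_circuit {X : Set (Fin 2 → ℝ)} (hX : X.Finite) (hgp : GenPos X)
    {T : Set (Fin 2 → ℝ)} {x : Fin 2 → ℝ} (hTX : T ⊆ X) (hT3 : T.ncard = 3)
    (hxX : x ∈ X) (hxT : x ∉ T) (hxh : x ∈ convexHull ℝ T) : CircuitOn X (insert x T) := by
  have hsub : insert x T ⊆ X := insert_subset hxX hTX
  have hfin : (insert x T).Finite := hX.subset hsub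
  have hc4 : (insert x T).ncard = 4 := by
    rw [Set.ncard_insert_of_notMem hxT (hX.subset hTX)]
    omega
  refine ⟨hsub, ⟨x, mem_insert _ _, by
    rw [Set.insert_diff_self_of_notMem hxT]; exact ⟨hxh, hxX⟩⟩, ?_⟩
  rintro D hD ⟨y, hyD, hyh, hyX⟩
  have hDfin : D.Finite := hfin.subset hD
  have hDX : D ⊆ X := hD.trans hsub
  obtain ⟨T', hT'el, hT'3, hyT'⟩ := exists_tri hgp (fun z hz => hDX hz.1) hyX
    (fun h => h.2 rfl) hyh
  have hins : insert y T' ⊆ D := insert_subset hyD (hT'el.trans diff_subset)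
  have h4 : 4 ≤ D.ncard := by
    have hle := Set.ncard_le_ncard hins hDfin
    rw [Set.ncard_insert_of_notMem (fun h => (hT'el h).2 rfl) (hDfin.subset (hT'el.trans diff_subset))] at hle
    omega
  exact Set.eq_of_subset_of_ncard_le hD (by omega) hfin

lemma circuit_root {X : Set (Fin 2 → ℝ)} (hX : X.Finite) (hgp : GenPos X)
    {C : Set (Fin 2 → ℝ)} (hC : CircuitOn X C) :
    ∃ x ∈ C, x ∈ convexHull ℝ (C \ {x}) ∧ (C \ {x}).ncard = 3 ∧ C.ncard = 4 := by
  obtain ⟨hCX, ⟨x, hxC, hxh, hxX⟩, hmin⟩ := hC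
  have hfin : C.Finite := hX.subset hCX
  obtain ⟨T, hTsub, hT3, hxT⟩ := exists_tri hgp (fun z hz => hCX hz.1) (hCX hxC)
    (fun h => h.2 rfl) hxh
  have hxnT : x ∉ T := fun h => (hTsub h).2 rfl
  have heq : insert x T = C := by
    apply hmin _ (insert_subset hxC (hTsub.trans diff_subset))
    exact ⟨x, mem_insert _ _, by
      rw [Set.insert_diff_self_of_notMem hxnT]; exact ⟨hxT, hCX hxC⟩⟩
  have hc4 : C.ncard = 4 := by
    rw [← heq, Set.ncard_insert_of_notMem hxnT (hfin.subset (heq ▸ subset_insert x T))]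
    omega
  refine ⟨x, hxC, hxh, ?_, hc4⟩
  rw [Set.ncard_diff_singleton_of_mem hxC, hc4]

/-- In the geometry induced on a finite planar set in general position,
every circuit has exactly 4 elements and `C ↦ (C \ {root C}, root C)` is a bijection
from circuits onto rooted triangles. -/
theorem circuits_biject_rooted_triangles (X : Set (Fin 2 → ℝ)) (hX : X.Finite)
    (hgp : GenPos X) :
    (∀ C : Set (Fin 2 → ℝ), CircuitOn X C → C.ncard = 4) ∧
    ∃ Φ : {C : Set (Fin 2 → ℝ) // CircuitOn X C} →
        {p : Set (Fin 2 → ℝ) × (Fin 2 → ℝ) // RootedTriOn X p},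
      Function.Bijective Φ ∧
      ∀ C : {C : Set (Fin 2 → ℝ) // CircuitOn X C},
        (Φ C).1.2 ∈ C.1 ∧ (Φ C).1.2 ∈ convexHull ℝ (C.1 \ {(Φ C).1.2}) ∧
        (Φ C).1.1 = C.1 \ {(Φ C).1.2} := by
  classical
  have key : ∀ C : Set (Fin 2 → ℝ), CircuitOn X C →
      ∃ x ∈ C, x ∈ convexHull ℝ (C \ {x}) ∧ (C \ {x}).ncard = 3 ∧ C.ncard = 4 :=
    fun C hC => circuit_root hX hgp hC
  refine ⟨fun C hC => ((key C hC).choose_spec).2.2.2, ?_⟩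
  let r : {C // CircuitOn X C} → (Fin 2 → ℝ) := fun c => (key c.1 c.2).choose
  have hr : ∀ c : {C // CircuitOn X C}, r c ∈ c.1 ∧ r c ∈ convexHull ℝ (c.1 \ {r c}) ∧
      (c.1 \ {r c}).ncard = 3 ∧ c.1.ncard = 4 := fun c => (key c.1 c.2).choose_spec
  have hRT : ∀ c : {C // CircuitOn X C}, RootedTriOn X (c.1 \ {r c}, r c) := by
    intro c
    obtain ⟨h1, h2, h3, h4⟩ := hr c
    exact ⟨fun z hz => c.2.1 hz.1, h3, c.2.1 h1, fun h => h.2 rfl, h2⟩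
  refine ⟨fun c => ⟨(c.1 \ {r c}, r c), hRT c⟩, ?_, fun c => ⟨(hr c).1, (hr c).2.1, rfl⟩⟩
  rw [Function.bijective_iff_has_inverse]
  refine ⟨fun p => ⟨insert p.1.2 p.1.1,
    tri_circuit hX hgp p.2.1 p.2.2.1 p.2.2.2.1 p.2.2.2.2.1 p.2.2.2.2.2⟩, ?_, ?_⟩
  · intro c
    apply Subtype.ext
    simp only
    rw [Set.insert_diff_singleton, Set.insert_eq_self.mpr (hr c).1]
  · rintro ⟨⟨T, x⟩, hTX, hT3, hxX, hxT, hxh⟩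
    apply Subtype.ext
    set c : {C // CircuitOn X C} := ⟨insert x T,
      tri_circuit hX hgp hTX hT3 hxX hxT hxh⟩ with hcdef
    obtain ⟨h1, h2, h3, h4⟩ := hr c
    have hCX : insert x T ⊆ X := insert_subset hxX hTX
    have hfin : (insert x T).Finite := hX.subset hCX
    have hrx : r c = x := by
      apply root_eq hgp hCX hfin (le_of_eq h4) h1 (mem_insert _ _) h2
      rw [Set.insert_diff_self_of_notMem hxT]
      exact hxh
    show (c.1 \ {r c}, r c) = (T, x)
    rw [hrx]
    show (insert x T \ {x}, x) = (T, x)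
    rw [Set.insert_diff_self_of_notMem hxT]
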